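/- Let (Φ_t)_{t=0}^n be defined by Φ_t(x) = ‖x‖²/(2σ²) + η·Σ_{u≤t} q̂_u(x) for quadratic functions q̂_u, assume each Φ_t is convex, let (K_t)_{t=0}^n be a decreasing sequence of subsets of a convex set K, and let x_t = argmin_{x ∈ K_{t-1}} Φ_{t-1}(x). Then for any x ∈ K_n: η·Σ_{t=1}^n (q̂_t(x_t) − q̂_t(x)) ≤ ‖x‖²/(2σ²) + 2η²·Σ_{t=1}^n ‖q̂_t'(x_t)‖²_{(Φ_t'')^{-1}}, where ‖g‖²_A = gᵀAg. -/

import Mathlib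

open Matrix Finset

lemma dot_symm_swap {d : ℕ} (M : Matrix (Fin d) (Fin d) ℝ) (hM : M.IsSymm)
    (a b : Fin d → ℝ) : a ⬝ᵥ M.mulVec b = M.mulVec a ⬝ᵥ b := by
  rw [Matrix.dotProduct_mulVec, show a ᵥ* M = M *ᵥ a from by
    nth_rewrite 1 [← hM.eq]; rw [Matrix.vecMul_transpose]]

lemma expand_quad {d : ℕ} (M : Matrix (Fin d) (Fin d) ℝ) (hM : M.IsSymm)
    (a b : Fin d → ℝ) :
    (a + b) ⬝ᵥ M.mulVec (a + b)
      = a ⬝ᵥ M.mulVec a + 2 * (M.mulVec a ⬝ᵥ b) + b ⬝ᵥ M.mulVec b := by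
  rw [Matrix.mulVec_add, dotProduct_add, add_dotProduct, add_dotProduct,
    dot_symm_swap M hM a b, dotProduct_comm b (M.mulVec a)]
  ring

lemma sum_mulVec' {d : ℕ} (s : Finset ℕ) (A : ℕ → Matrix (Fin d) (Fin d) ℝ)
    (w : Fin d → ℝ) : (∑ u ∈ s, A u) *ᵥ w = ∑ u ∈ s, A u *ᵥ w := by
  ext i
  simp [Matrix.mulVec, dotProduct, Matrix.sum_apply, Finset.sum_mul]
  rw [Finset.sum_comm]

lemma sum_dotProduct' {d : ℕ} (s : Finset ℕ) (f : ℕ → Fin d → ℝ) (w : Fin d → ℝ) :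
    (∑ u ∈ s, f u) ⬝ᵥ w = ∑ u ∈ s, f u ⬝ᵥ w := by
  simp only [dotProduct, Finset.sum_apply, Finset.sum_mul]
  rw [Finset.sum_comm]

lemma dotProduct_sum' {d : ℕ} (s : Finset ℕ) (f : ℕ → Fin d → ℝ) (w : Fin d → ℝ) :
    w ⬝ᵥ (∑ u ∈ s, f u) = ∑ u ∈ s, w ⬝ᵥ f u := by
  rw [dotProduct_comm, sum_dotProduct']
  exact Finset.sum_congr rfl fun u _ => dotProduct_comm _ _

lemma complete_sq {d : ℕ} (Hm : Matrix (Fin d) (Fin d) ℝ) (hpd : Hm.PosDef)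
    (hsymm : Hm.IsSymm) (v w : Fin d → ℝ) :
    -(v ⬝ᵥ w) - (1/2) * (w ⬝ᵥ Hm.mulVec w) ≤ (1/2) * (v ⬝ᵥ Hm⁻¹.mulVec v) := by
  have hinv : Hm * Hm⁻¹ = 1 := Matrix.mul_nonsing_inv _ hpd.det_pos.ne'.isUnit
  have h0 : 0 ≤ (w + Hm⁻¹.mulVec v) ⬝ᵥ Hm.mulVec (w + Hm⁻¹.mulVec v) := by
    have := hpd.posSemidef.dotProduct_mulVec_nonneg (w + Hm⁻¹.mulVec v)
    simpa using this
  rw [expand_quad Hm hsymm] at h0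
  have h1 : Hm.mulVec w ⬝ᵥ (Hm⁻¹.mulVec v) = w ⬝ᵥ v := by
    rw [← dot_symm_swap Hm hsymm, Matrix.mulVec_mulVec, hinv, Matrix.one_mulVec]
  have h2 : (Hm⁻¹.mulVec v) ⬝ᵥ Hm.mulVec (Hm⁻¹.mulVec v) = v ⬝ᵥ Hm⁻¹.mulVec v := by
    rw [Matrix.mulVec_mulVec, hinv, Matrix.one_mulVec, dotProduct_comm]
  rw [h1, h2] at h0
  have h3 : v ⬝ᵥ w = w ⬝ᵥ v := dotProduct_comm _ _
  linarith

/-- Follow-the-regularised-leader with quadratic losses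
`q̂ u x = c u + ⟨g u, x⟩ + (1/2) xᵀ (A u) x`.  With
`Φ t x = ‖x‖²/(2σ²) + η Σ_{u<t} q̂ u x` (assumed convex, with positive
definite Hessian `H t = σ⁻² I + η Σ_{u<t} A u`), a decreasing sequence of
convex sets `K t` and iterates `x t` minimising `Φ t` over `K t`, the
quadratic regret against any `x⋆ ∈ K n` is bounded as stated. -/
theorem statement10 {d n : ℕ} (σ η : ℝ) (hσ : 0 < σ) (hη : 0 < η)
    (c : ℕ → ℝ) (g : ℕ → Fin d → ℝ) (A : ℕ → Matrix (Fin d) (Fin d) ℝ)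
    (hAsymm : ∀ u, (A u).IsSymm)
    (q : ℕ → (Fin d → ℝ) → ℝ)
    (hq : ∀ u x, q u x = c u + g u ⬝ᵥ x + (1/2) * (x ⬝ᵥ (A u).mulVec x))
    (Φ : ℕ → (Fin d → ℝ) → ℝ)
    (hΦ : ∀ t x, Φ t x = (x ⬝ᵥ x) / (2 * σ ^ 2) + η * ∑ u ∈ range t, q u x)
    (H : ℕ → Matrix (Fin d) (Fin d) ℝ)
    (hH : ∀ t, H t = (σ ^ 2)⁻¹ • (1 : Matrix (Fin d) (Fin d) ℝ) + η • ∑ u ∈ range t, A u)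
    (hHpd : ∀ t ≤ n, (H t).PosDef)
    (K : ℕ → Set (Fin d → ℝ))
    (hKconv : ∀ t, Convex ℝ (K t)) (hKne : ∀ t, (K t).Nonempty)
    (hKclosed : ∀ t, IsClosed (K t)) (hKanti : ∀ s t, s ≤ t → K t ⊆ K s)
    (x : ℕ → Fin d → ℝ)
    (hxmem : ∀ t < n, x t ∈ K t)
    (hxmin : ∀ t < n, ∀ y ∈ K t, Φ t (x t) ≤ Φ t y)
    (xs : Fin d → ℝ) (hxs : xs ∈ K n) :
    η * ∑ t ∈ range n, (q t (x t) - q t xs) ≤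
      (xs ⬝ᵥ xs) / (2 * σ ^ 2) +
        2 * η ^ 2 * ∑ t ∈ range n,
          (g t + (A t).mulVec (x t)) ⬝ᵥ ((H (t + 1))⁻¹).mulVec (g t + (A t).mulVec (x t)) := by
  have hσ2 : (0:ℝ) < σ ^ 2 := by positivity
  -- symmetry of H
  have hHsymm : ∀ t ≤ n, (H t).IsSymm := by
    intro t ht
    have := (hHpd t ht).isHermitian
    rwa [Matrix.IsHermitian, Matrix.conjTranspose_eq_transpose_of_trivial] at this
  -- quadratic expansion of Φ
  have expand : ∀ t (y w : Fin d → ℝ), Φ t (y + w) = Φ t y +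
      ((σ ^ 2)⁻¹ • y + η • ∑ u ∈ range t, (g u + (A u).mulVec y)) ⬝ᵥ w
      + (1/2) * (w ⬝ᵥ (H t).mulVec w) := by
    intro t y w
    have hq' : ∀ u, q u (y + w) = q u y + (g u + (A u).mulVec y) ⬝ᵥ w
        + (1/2) * (w ⬝ᵥ (A u).mulVec w) := by
      intro u
      rw [hq, hq, expand_quad (A u) (hAsymm u)]
      simp only [dotProduct_add, add_dotProduct]
      ring
    have hdot : (y + w) ⬝ᵥ (y + w) = y ⬝ᵥ y + 2 * (y ⬝ᵥ w) + w ⬝ᵥ w := by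
      rw [dotProduct_add, add_dotProduct, add_dotProduct, dotProduct_comm w y]
      ring
    rw [hΦ, hΦ, hH, hdot]
    simp only [hq']
    rw [Finset.sum_add_distrib, Finset.sum_add_distrib, ← Finset.mul_sum]
    rw [add_dotProduct, smul_dotProduct, smul_dotProduct, sum_dotProduct']
    rw [Matrix.add_mulVec, Matrix.smul_mulVec, Matrix.one_mulVec,
      Matrix.smul_mulVec, sum_mulVec', dotProduct_add, dotProduct_smul,
      dotProduct_smul, dotProduct_sum']
    simp only [smul_eq_mul]
    field_simp
    ring
  -- variational inequality
  have VI : ∀ t < n, ∀ z ∈ K t, 0 ≤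
      ((σ ^ 2)⁻¹ • (x t) + η • ∑ u ∈ range t, (g u + (A u).mulVec (x t))) ⬝ᵥ (z - x t) := by
    intro t ht z hz
    set w := z - x t with hw
    set Gd := ((σ ^ 2)⁻¹ • (x t) + η • ∑ u ∈ range t, (g u + (A u).mulVec (x t))) ⬝ᵥ w with hGd
    set C := (1/2) * (w ⬝ᵥ (H t).mulVec w) with hC
    have hC0 : 0 ≤ C := by
      have := (hHpd t ht.le).posSemidef.dotProduct_mulVec_nonneg w
      simp only [star_trivial] at this
      rw [hC]; linarith
    have key : ∀ l : ℝ, 0 < l → l ≤ 1 → 0 ≤ l * Gd + l^2 * C := by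
      intro l hl0 hl1
      have hmem : x t + l • w ∈ K t := by
        have h := hKconv t (hxmem t ht) hz (by linarith : (0:ℝ) ≤ 1 - l) hl0.le (by ring)
        have he : x t + l • w = (1 - l) • x t + l • z := by
          rw [hw]; module
        rwa [he]
      have h2 := hxmin t ht _ hmem
      rw [expand t (x t) (l • w)] at h2
      rw [dotProduct_smul, Matrix.mulVec_smul, dotProduct_smul, smul_dotProduct] at h2
      simp only [smul_eq_mul] at h2
      rw [hGd, hC]
      nlinarith [h2]
    by_contra hneg
    push_neg at hneg
    have h1 := key 1 one_pos le_rfl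
    have hCpos : 0 < C := by nlinarith
    set l := -Gd / (2 * C) with hl
    have hl0 : 0 < l := div_pos (by linarith) (by linarith)
    have hl1 : l ≤ 1 := by
      rw [hl, div_le_one (by linarith)]; linarith
    have hk := key l hl0 hl1
    have heq : l * Gd + l^2 * C = -(Gd^2) / (4 * C) := by
      rw [hl]; field_simp; ring
    rw [heq] at hk
    rw [le_div_iff₀ (by linarith : (0:ℝ) < 4 * C)] at hk
    nlinarith [mul_pos (neg_pos.2 hneg) (neg_pos.2 hneg)]
  -- per-step bound
  have step : ∀ t < n, ∀ z ∈ K (t+1),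
      Φ (t+1) (x t) - Φ (t+1) z ≤ 2 * η^2 *
        ((g t + (A t).mulVec (x t)) ⬝ᵥ ((H (t + 1))⁻¹).mulVec (g t + (A t).mulVec (x t))) := by
    intro t ht z hz
    set vt := g t + (A t).mulVec (x t) with hvt
    set w := z - x t with hw
    have hz' : z = x t + w := by rw [hw]; abel
    have ht1 : t + 1 ≤ n := ht
    have hr0 : 0 ≤ vt ⬝ᵥ ((H (t + 1))⁻¹).mulVec vt := by
      have := ((hHpd (t+1) ht1).inv).posSemidef.dotProduct_mulVec_nonneg vt
      simpa using this
    have hGsplit :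
        ((σ ^ 2)⁻¹ • (x t) + η • ∑ u ∈ range (t+1), (g u + (A u).mulVec (x t))) ⬝ᵥ w
        = ((σ ^ 2)⁻¹ • (x t) + η • ∑ u ∈ range t, (g u + (A u).mulVec (x t))) ⬝ᵥ w
          + (η • vt) ⬝ᵥ w := by
      rw [Finset.sum_range_succ, smul_add, ← add_assoc, add_dotProduct, hvt]
    have hVI := VI t ht z (hKanti t (t+1) (Nat.le_succ t) hz)
    have hcs := complete_sq (H (t+1)) (hHpd (t+1) ht1) (hHsymm (t+1) ht1) (η • vt) w
    have hsm : (η • vt) ⬝ᵥ ((H (t + 1))⁻¹).mulVec (η • vt)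
        = η^2 * (vt ⬝ᵥ ((H (t + 1))⁻¹).mulVec vt) := by
      rw [smul_dotProduct, Matrix.mulVec_smul, dotProduct_smul]
      simp only [smul_eq_mul]; ring
    rw [hsm] at hcs
    have hexp := expand (t+1) (x t) w
    rw [← hz'] at hexp
    rw [hGsplit] at hexp
    rw [smul_dotProduct] at hcs hexp
    simp only [smul_eq_mul] at hcs hexp
    nlinarith [hcs, hexp, hVI, hr0, sq_nonneg η]
  -- telescoping
  set zf : ℕ → Fin d → ℝ := fun s => if s < n then x s else xs with hzf
  have hzmem : ∀ s, s ≤ n → zf s ∈ K s := by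
    intro s hs
    by_cases h : s < n
    · simpa [hzf, h] using hxmem s h
    · have : s = n := le_antisymm hs (not_lt.1 h)
      subst this
      simpa [hzf, h] using hxs
  have hzn : zf n = xs := by simp [hzf]
  have hstep1 : ∀ t (y : Fin d → ℝ), Φ (t+1) y - Φ t y = η * q t y := by
    intro t y
    rw [hΦ, hΦ, Finset.sum_range_succ]
    ring
  have hΦ0 : ∀ y : Fin d → ℝ, Φ 0 y = (y ⬝ᵥ y) / (2 * σ ^ 2) := by
    intro y; rw [hΦ]; simp
  have hΦ0nn : ∀ y : Fin d → ℝ, 0 ≤ Φ 0 y := by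
    intro y
    rw [hΦ0]
    have : 0 ≤ y ⬝ᵥ y := Finset.sum_nonneg fun i _ => mul_self_nonneg _
    positivity
  -- main identity
  have hid : η * ∑ t ∈ range n, (q t (x t) - q t xs)
      = ∑ t ∈ range n, (Φ (t+1) (x t) - Φ (t+1) (zf (t+1)))
        + Φ 0 xs - Φ 0 (zf 0) := by
    rw [Finset.mul_sum]
    have h1 : ∀ t ∈ range n, η * (q t (x t) - q t xs)
        = (Φ (t+1) (x t) - Φ (t+1) (zf (t+1)))
          + (Φ (t+1) (zf (t+1)) - Φ t (zf t))
          - (Φ (t+1) xs - Φ t xs) := by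
      intro t htr
      have ht := Finset.mem_range.1 htr
      have hzt : zf t = x t := by simp [hzf, ht]
      rw [mul_sub, ← hstep1 t (x t), ← hstep1 t xs, hzt]
      ring
    rw [Finset.sum_congr rfl h1]
    have h2 : ∀ t ∈ range n,
        (Φ (t+1) (x t) - Φ (t+1) (zf (t+1)))
          + (Φ (t+1) (zf (t+1)) - Φ t (zf t))
          - (Φ (t+1) xs - Φ t xs)
        = (Φ (t+1) (x t) - Φ (t+1) (zf (t+1)))
          + ((Φ (t+1) (zf (t+1)) - Φ t (zf t)) - (Φ (t+1) xs - Φ t xs)) := by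
      intro t _; ring
    rw [Finset.sum_congr rfl h2, Finset.sum_add_distrib, Finset.sum_sub_distrib,
      Finset.sum_sub_distrib,
      Finset.sum_range_sub (fun s => Φ s (zf s)), Finset.sum_range_sub (fun s => Φ s xs),
      hzn]
    ring
  -- assemble
  have hbd : ∑ t ∈ range n, (Φ (t+1) (x t) - Φ (t+1) (zf (t+1)))
      ≤ ∑ t ∈ range n, 2 * η^2 *
        ((g t + (A t).mulVec (x t)) ⬝ᵥ ((H (t + 1))⁻¹).mulVec (g t + (A t).mulVec (x t))) := by
    apply Finset.sum_le_sum
    intro t htr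
    have ht := Finset.mem_range.1 htr
    exact step t ht (zf (t+1)) (hzmem (t+1) ht)
  rw [hid, hΦ0 xs]
  rw [← Finset.mul_sum] at hbd
  have := hΦ0nn (zf 0)
  linarith
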